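/- Let k > 0 and let (c_k, …, c_{k-u}), (a_k, …, a_{k-s}), (b_k, …, b_{k-t}) be integer sequences admissible for k with c_k ≤ a_k. If Σ_{i=0}^{u} C(c_{k-i}, k-i) + Σ_{i=0}^{s} C(a_{k-i}, k-i) = C(a_k + 1, k) + Σ_{i=0}^{t} C(b_{k-i}, k-i), then C(a_k + 1, k+1) + Σ_{i=0}^{t} C(b_{k-i}, k+1-i) > Σ_{i=0}^{u} C(c_{k-i}, k+1-i) + Σ_{i=0}^{s} C(a_{k-i}, k+1-i). -/

import Mathlib

/-- Binomial coefficient `C(n, t)` with an integer lower index, `0` when `t < 0`. -/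
def chooseZ (n : ℕ) (t : ℤ) : ℕ := if 0 ≤ t then n.choose t.toNat else 0

/-- `Σ_{i=0}^{s} C(a_{k-i}, j-i)`, where `a i` stands for `a_{k-i}`. -/
def cSumZ (a : ℕ → ℕ) (s : ℕ) (j : ℤ) : ℕ :=
  ∑ i ∈ Finset.range (s + 1), chooseZ (a i) (j - i)

/-- `a i` stands for `n_{k-i}`: the sequence `(n_k, …, n_{k-s})` is admissible for `k` iff
`n_k > n_{k-1} > … > n_{k-s} ≥ k-s > 0`. -/
def Admissible (k s : ℕ) (a : ℕ → ℕ) : Prop :=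
  s < k ∧ (∀ i < s, a (i + 1) < a i) ∧ k - s ≤ a s

namespace ALX

/-- greatest m with C(m,r) ≤ N (for r ≥ 1). -/
def topc (r N : ℕ) : ℕ := Nat.findGreatest (fun m => m.choose r ≤ N) (N + r)

lemma pascal (m j : ℕ) (hj : 1 ≤ j) : (m+1).choose j = m.choose (j-1) + m.choose j := by
  obtain ⟨j', rfl⟩ : ∃ j', j = j' + 1 := ⟨j - 1, by omega⟩
  simpa using Nat.choose_succ_succ m j'

lemma choose_ge_sub (m r : ℕ) (hr : 1 ≤ r) (h : r ≤ m) : m + 1 - r ≤ m.choose r := by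
  induction m with
  | zero => omega
  | succ m ih =>
    rcases Nat.eq_or_lt_of_le h with h' | h'
    · rw [← h', Nat.choose_self]; omega
    · have hr' : r ≤ m := by omega
      have h1 : 1 ≤ m.choose (r-1) := Nat.choose_pos (by omega)
      have h2 : m + 1 - r ≤ m.choose r := ih hr'
      have hps := pascal m r hr
      omega

lemma topc_le {r N : ℕ} (hr : 1 ≤ r) : (topc r N).choose r ≤ N := by
  have h0 : Nat.choose 0 r ≤ N := by
    rw [Nat.choose_eq_zero_of_lt (by omega)]; omega
  exact Nat.findGreatest_spec (P := fun m => m.choose r ≤ N) (Nat.zero_le _) h0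

lemma topc_lt {r N : ℕ} (hr : 1 ≤ r) : N < (topc r N + 1).choose r := by
  by_cases h : topc r N + 1 ≤ N + r
  · have hg := Nat.findGreatest_is_greatest (P := fun m => m.choose r ≤ N)
      (Nat.lt_succ_self (topc r N)) h
    rw [Nat.succ_eq_add_one] at hg
    simp only [topc] at hg ⊢
    omega
  · have hle : topc r N ≤ N + r := Nat.findGreatest_le (N + r)
    have htop : topc r N = N + r := by omega
    have hcg : N + r + 1 + 1 - r ≤ (N + r + 1).choose r := choose_ge_sub _ _ hr (by omega)
    rw [htop]
    omega

lemma topc_unique {r N m : ℕ} (hr : 1 ≤ r) (h1 : m.choose r ≤ N) (h2 : N < (m+1).choose r) :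
    topc r N = m := by
  have hub : m ≤ N + r := by
    by_cases hm : r ≤ m
    · have := choose_ge_sub m r hr hm; omega
    · omega
  have hge : m ≤ topc r N := Nat.le_findGreatest hub h1
  have hle : topc r N ≤ m := by
    by_contra hc
    push_neg at hc
    have h3 : (m+1).choose r ≤ (topc r N).choose r := Nat.choose_le_choose r (by omega)
    have h4 := topc_le (N := N) hr
    omega
  omega

lemma topc_ge {r N : ℕ} (hr : 1 ≤ r) (hN : 1 ≤ N) : r ≤ topc r N :=
  Nat.le_findGreatest (by omega) (by simpa using hN)

/-- cascade lift function -/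
def Lf : ℕ → ℕ → ℕ
  | 0, _ => 0
  | (j+1), N => if N = 0 then 0 else
      (topc (j+1) N).choose (j+2) + Lf j (N - (topc (j+1) N).choose (j+1))

/-- cascade shadow function -/
def Shf : ℕ → ℕ → ℕ
  | 0, _ => 0
  | (r+1), N => if N = 0 then 0 else
      (topc (r+1) N).choose r + Shf r (N - (topc (r+1) N).choose (r+1))

@[simp] lemma Lf_zero (j : ℕ) : Lf j 0 = 0 := by cases j <;> simp [Lf]
@[simp] lemma Shf_zero (r : ℕ) : Shf r 0 = 0 := by cases r <;> simp [Shf]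
@[simp] lemma Lf_lzero (N : ℕ) : Lf 0 N = 0 := by simp [Lf]
@[simp] lemma Shf_lzero (N : ℕ) : Shf 0 N = 0 := by simp [Shf]

lemma Lf_block {j m N : ℕ} (hj : 1 ≤ j) (hm : j ≤ m) (h1 : m.choose j ≤ N)
    (h2 : N < (m+1).choose j) : Lf j N = m.choose (j+1) + Lf (j-1) (N - m.choose j) := by
  have hN : N ≠ 0 := by have := Nat.choose_pos hm; omega
  have ht := topc_unique hj h1 h2
  obtain ⟨j', rfl⟩ : ∃ j', j = j' + 1 := ⟨j - 1, by omega⟩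
  simp only [Lf, if_neg hN, ht]
  norm_num

lemma Shf_block {r m N : ℕ} (hr : 1 ≤ r) (hm : r ≤ m) (h1 : m.choose r ≤ N)
    (h2 : N < (m+1).choose r) : Shf r N = m.choose (r-1) + Shf (r-1) (N - m.choose r) := by
  have hN : N ≠ 0 := by have := Nat.choose_pos hm; omega
  have ht := topc_unique hr h1 h2
  obtain ⟨r', rfl⟩ : ∃ r', r = r' + 1 := ⟨r - 1, by omega⟩
  simp only [Shf, if_neg hN, ht]
  norm_num

end ALX

namespace ALX

lemma choose_lt_succ {m r : ℕ} (hr : 1 ≤ r) (hm : r ≤ m) : m.choose r < (m+1).choose r := by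
  have h1 : 1 ≤ m.choose (r-1) := Nat.choose_pos (by omega)
  have := pascal m r hr
  omega

lemma choose_pred_self {r : ℕ} (hr : 1 ≤ r) : r.choose (r-1) = r := by
  have h := Nat.choose_symm (n := r) (k := 1) hr
  rw [h, Nat.choose_one_right]

/-- boundary value of Lf -/
lemma Lf_boundary {j m : ℕ} (hj : 1 ≤ j) (hm : j ≤ m) : Lf j (m.choose j) = m.choose (j+1) := by
  rw [Lf_block hj hm le_rfl (choose_lt_succ hj hm)]
  simp

/-- boundary value of Shf -/
lemma Shf_boundary {r m : ℕ} (hr : 1 ≤ r) (hm : r ≤ m) : Shf r (m.choose r) = m.choose (r-1) := by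
  rw [Shf_block hr hm le_rfl (choose_lt_succ hr hm)]
  simp

lemma Shf_one {r : ℕ} (hr : 1 ≤ r) : Shf r 1 = r := by
  have h := Shf_boundary hr (le_refl r)
  rw [Nat.choose_self, choose_pred_self hr] at h
  exact h

lemma Lf_one_level {N : ℕ} : Lf 1 N = N.choose 2 := by
  rcases Nat.eq_zero_or_pos N with h | h
  · simp [h]
  · rw [Lf_block le_rfl h (by simp [Nat.choose_one_right])
      (by simp [Nat.choose_one_right])]
    simp [Nat.choose_one_right]

lemma Lf_small {j N : ℕ} (h : N ≤ j) : Lf j N = 0 := by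
  induction j generalizing N with
  | zero => simp
  | succ j ih =>
    rcases Nat.eq_zero_or_pos N with h0 | h0
    · simp [h0]
    · have h1 : (j+1).choose (j+1) ≤ N := by simp [Nat.choose_self]; omega
      have h2 : N < (j+2).choose (j+1) := by
        rw [Nat.choose_succ_self_right]; omega
      rw [Lf_block (by omega) le_rfl h1 h2]
      rw [Nat.choose_succ_self, Nat.choose_self]
      simpa using ih (by omega)

lemma Lf_diag_base {j : ℕ} (hj : 2 ≤ j) : Lf (j-1) j = 1 := by
  have h := Lf_boundary (j := j-1) (m := j) (by omega) (by omega)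
  rw [choose_pred_self (by omega)] at h
  have h2 : j - 1 + 1 = j := by omega
  rw [h2, Nat.choose_self] at h
  exact h

end ALX

namespace ALX

theorem idt : ∀ n k C : ℕ, 1 ≤ k → k < n → C ≤ n.choose k →
    Lf k C + Shf (n-k) (n.choose k - C) = n.choose (k+1) := by
  intro n
  induction n using Nat.strong_induction_on with
  | _ n ih =>
  intro k C hk hkn hC
  have hkn' : k ≤ n := le_of_lt hkn
  rcases eq_or_lt_of_le hC with hCeq | hClt
  · subst hCeq
    rw [Nat.sub_self, Shf_zero, Lf_boundary hk hkn', add_zero]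
  rcases Nat.eq_zero_or_pos C with hC0 | hC1
  · subst hC0
    rw [Nat.sub_zero, Lf_zero, zero_add]
    have hsym : n.choose (n-k) = n.choose k := Nat.choose_symm hkn'
    rw [← hsym]
    rw [Shf_boundary (by omega) (by omega)]
    have h2 := Nat.choose_symm (n := n) (k := k+1) (by omega)
    rw [show n-(k+1) = n-k-1 by omega] at h2
    exact h2
  by_cases hb1 : (n-1).choose k ≤ C
  · -- C in the top block
    have hkn1 : k ≤ n - 1 := by omega
    have hblockL := Lf_block hk hkn1 hb1
      (by rw [show n-1+1 = n by omega]; exact hClt)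
    have hps : n.choose k = (n-1).choose (k-1) + (n-1).choose k := by
      have h := pascal (n-1) k hk; rw [show n-1+1 = n by omega] at h; exact h
    have hps' : n.choose (k+1) = (n-1).choose k + (n-1).choose (k+1) := by
      have h := pascal (n-1) (k+1) (by omega)
      rw [show n-1+1 = n by omega, show k+1-1 = k from rfl] at h; exact h
    by_cases hk2 : 2 ≤ k
    · have hihyp := ih (n-1) (by omega) (k-1) (C - (n-1).choose k) (by omega) (by omega)
        (by omega)
      rw [show n-1-(k-1) = n-k by omega,
          show (n-1).choose (k-1) - (C - (n-1).choose k) = n.choose k - C by omega,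
          show k-1+1 = k by omega] at hihyp
      omega
    · have hk1 : k = 1 := by omega
      subst hk1
      have h1 : (n-1).choose 1 = n-1 := Nat.choose_one_right _
      have h2 : n.choose 1 = n := Nat.choose_one_right _
      have hCeq : C = n - 1 := by omega
      have hL := Lf_one_level (N := C)
      have hShone : Shf (n-1) 1 = n-1 := Shf_one (by omega)
      have harg : n.choose 1 - C = 1 := by omega
      have hps2 : n.choose 2 = (n-1).choose 1 + (n-1).choose 2 := by
        have h := pascal (n-1) 2 (by omega)
        rw [show n-1+1 = n by omega, show 2-1 = 1 from rfl] at h; exact h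
      rw [harg, hShone, hL, hCeq]
      norm_num
      omega
  · -- C below the top block
    push_neg at hb1
    have hk2n : k ≤ n - 2 := by
      by_contra h'
      have hkeq : k = n-1 := by omega
      rw [hkeq, Nat.choose_self] at hb1
      omega
    have hps : n.choose k = (n-1).choose (k-1) + (n-1).choose k := by
      have h := pascal (n-1) k hk; rw [show n-1+1 = n by omega] at h; exact h
    have hsym1 : (n-1).choose (k-1) = (n-1).choose (n-k) := by
      have h := Nat.choose_symm (n := n-1) (k := k-1) (by omega)
      rw [show n-1-(k-1) = n-k by omega] at h; exact h.symm
    have hsymn : n.choose (n-k) = n.choose k := Nat.choose_symm hkn'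
    have hlow : (n-1).choose (n-k) ≤ n.choose k - C := by omega
    have hhigh : n.choose k - C < (n-1+1).choose (n-k) := by
      rw [show n-1+1 = n by omega, hsymn]; omega
    have hblockS := Shf_block (r := n-k) (m := n-1) (by omega) (by omega) hlow hhigh
    have e5 : (n-1).choose (n-k-1) = (n-1).choose k := by
      have h := Nat.choose_symm (n := n-1) (k := k) (by omega)
      rw [show n-1-k = n-k-1 by omega] at h; exact h
    have e6 : n.choose k - C - (n-1).choose (n-k) = (n-1).choose k - C := by omega
    rw [e5, e6, show n-k-1 = n-1-k by omega] at hblockS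
    have hihyp := ih (n-1) (by omega) k C hk (by omega) (le_of_lt hb1)
    have hps' : n.choose (k+1) = (n-1).choose k + (n-1).choose (k+1) := by
      have h := pascal (n-1) (k+1) (by omega)
      rw [show n-1+1 = n by omega, show k+1-1 = k from rfl] at h; exact h
    omega

/-- Lf is bounded on a block -/
lemma Lf_le (n k C : ℕ) (hk : 1 ≤ k) (hkn : k < n) (hC : C ≤ n.choose k) :
    Lf k C ≤ n.choose (k+1) := by
  have := idt n k C hk hkn hC; omega

/-- Shf is bounded -/
lemma Shf_le {t m V : ℕ} (ht : 1 ≤ t) (htm : t ≤ m) (hV : V ≤ m.choose t) :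
    Shf t V ≤ m.choose (t-1) := by
  rcases eq_or_lt_of_le htm with he | hlt
  · subst he
    rw [Nat.choose_self] at hV
    interval_cases V
    · simp
    · rw [Shf_one ht, choose_pred_self ht]
  · have h := idt m (m-t) (m.choose (m-t) - V) (by omega) (by omega) (by omega)
    have hsym : m.choose (m-t) = m.choose t := Nat.choose_symm (by omega)
    rw [show m - (m-t) = t by omega,
        show m.choose (m-t) - (m.choose (m-t) - V) = V by omega] at h
    have hsym2 : m.choose (m-t+1) = m.choose (t-1) := by
      have h2 := Nat.choose_symm (n := m) (k := t-1) (by omega)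
      rw [show m-(t-1) = m-t+1 by omega] at h2; exact h2
    omega

end ALX

namespace ALX

lemma topc_mono {r M N : ℕ} (h : M ≤ N) : topc r M ≤ topc r N :=
  Nat.findGreatest_mono (fun m hm => le_trans hm h) (by omega)

lemma Shf_level_one {M : ℕ} (h : 1 ≤ M) : Shf 1 M = 1 := by
  rw [Shf_block (r := 1) (m := M) le_rfl h (by simp [Nat.choose_one_right])
    (by simp [Nat.choose_one_right])]
  simp

lemma Shf_mono : ∀ r : ℕ, ∀ {M N : ℕ}, M ≤ N → Shf r M ≤ Shf r N := by
  intro r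
  induction r with
  | zero => intro M N h; simp
  | succ r ih =>
    intro M N h
    rcases Nat.eq_zero_or_pos M with h0 | h0
    · simp [h0]
    have hN : 1 ≤ N := by omega
    rcases Nat.eq_zero_or_pos r with hr0 | hr1
    · subst hr0
      rw [Shf_level_one h0, Shf_level_one hN]
    set tm := topc (r+1) M with htm
    set tn := topc (r+1) N with htn
    have htmge : r+1 ≤ tm := topc_ge (by omega) h0
    have htnge : r+1 ≤ tn := topc_ge (by omega) hN
    have hbM := Shf_block (r := r+1) (m := tm) (by omega) htmge (topc_le (by omega)) (topc_lt (by omega))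
    have hbN := Shf_block (r := r+1) (m := tn) (by omega) htnge (topc_le (by omega)) (topc_lt (by omega))
    rw [show r+1-1 = r from rfl] at hbM hbN
    have hmono : tm ≤ tn := topc_mono h
    rcases eq_or_lt_of_le hmono with he | hlt
    · rw [hbM, hbN, ← he]
      have := ih (M := M - tm.choose (r+1)) (N := N - tm.choose (r+1)) (by omega)
      omega
    · have htailM : M - tm.choose (r+1) ≤ tm.choose r := by
        have h2 := topc_lt (r := r+1) (N := M) (by omega)
        have h3 := pascal (tm) (r+1) (by omega)
        rw [show r+1-1 = r from rfl] at h3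
        rw [← htm] at h2
        omega
      have hShle : Shf r (M - tm.choose (r+1)) ≤ tm.choose (r-1) :=
        Shf_le hr1 (by omega) htailM
      have hp : (tm+1).choose r = tm.choose (r-1) + tm.choose r := pascal tm r hr1
      have hcc : (tm+1).choose r ≤ tn.choose r := Nat.choose_le_choose r (by omega)
      have hfirst : tn.choose r ≤ Shf (r+1) N := by rw [hbN]; omega
      omega

lemma Lf_mono : ∀ j : ℕ, ∀ {M N : ℕ}, M ≤ N → Lf j M ≤ Lf j N := by
  intro j
  induction j with
  | zero => intro M N h; simp
  | succ j ih =>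
    intro M N h
    rcases Nat.eq_zero_or_pos M with h0 | h0
    · simp [h0]
    have hN : 1 ≤ N := by omega
    rcases Nat.eq_zero_or_pos j with hj0 | hj1
    · subst hj0
      rw [Lf_one_level, Lf_one_level]
      exact Nat.choose_le_choose 2 h
    set tm := topc (j+1) M with htm
    set tn := topc (j+1) N with htn
    have htmge : j+1 ≤ tm := topc_ge (by omega) h0
    have htnge : j+1 ≤ tn := topc_ge (by omega) hN
    have hbM := Lf_block (j := j+1) (m := tm) (by omega) htmge (topc_le (by omega)) (topc_lt (by omega))
    have hbN := Lf_block (j := j+1) (m := tn) (by omega) htnge (topc_le (by omega)) (topc_lt (by omega))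
    rw [show j+1-1 = j from rfl, show j+1+1 = j+2 from rfl] at hbM hbN
    have hmono : tm ≤ tn := topc_mono h
    rcases eq_or_lt_of_le hmono with he | hlt
    · rw [hbM, hbN, ← he]
      have := ih (M := M - tm.choose (j+1)) (N := N - tm.choose (j+1)) (by omega)
      omega
    · have htailM : M - tm.choose (j+1) ≤ tm.choose j := by
        have h2 := topc_lt (r := j+1) (N := M) (by omega)
        have h3 := pascal (tm) (j+1) (by omega)
        rw [show j+1-1 = j from rfl] at h3
        rw [← htm] at h2
        omega
      have hLle : Lf j (M - tm.choose (j+1)) ≤ tm.choose (j+1) :=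
        Lf_le tm j _ hj1 (by omega) htailM
      have hp : (tm+1).choose (j+2) = tm.choose (j+1) + tm.choose (j+2) := by
        have := pascal tm (j+2) (by omega)
        rw [show j+2-1 = j+1 from rfl] at this
        exact this
      have hcc : (tm+1).choose (j+2) ≤ tn.choose (j+2) := Nat.choose_le_choose _ (by omega)
      have hfirst : tn.choose (j+2) ≤ Lf (j+1) N := by rw [hbN]; omega
      omega

end ALX

namespace ALX

lemma choose_two_superadd {U V : ℕ} (hU : 1 ≤ U) (hV : 1 ≤ V) :
    U.choose 2 + V.choose 2 ≤ (U+V-1).choose 2 := by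
  induction V with
  | zero => omega
  | succ V ihV =>
    rcases Nat.eq_zero_or_pos V with h0 | h1
    · subst h0
      rw [show U + 1 - 1 = U by omega]
      simp [Nat.choose]
    · have ih := ihV h1
      have hp1 : (V+1).choose 2 = V.choose 1 + V.choose 2 := by
        have := pascal V 2 (by omega); rw [show 2-1 = 1 from rfl] at this; exact this
      have hp2 : (U+V).choose 2 = (U+V-1).choose 1 + (U+V-1).choose 2 := by
        have := pascal (U+V-1) 2 (by omega)
        rw [show U+V-1+1 = U+V by omega, show 2-1 = 1 from rfl] at this; exact this
      have hc1 : V.choose 1 = V := Nat.choose_one_right V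
      have hc2 : (U+V-1).choose 1 = U+V-1 := Nat.choose_one_right _
      rw [show U + (V+1) - 1 = U + V by omega]
      omega

def Pmu (μ : ℕ) : Prop :=
  (∀ r X Y, 1 ≤ r → 1 ≤ X → 1 ≤ Y → X + Y ≤ μ →
      Shf r (X+Y) + 1 ≤ Shf r X + Shf r Y)
  ∧ (∀ r ν, 1 ≤ r → r ≤ ν → ν.choose r ≤ μ →
      Shf (r-1) (ν.choose r) + 1 ≤ ν.choose (r-1))
  ∧ (∀ r N, 1 ≤ r → 1 ≤ N → N ≤ μ → Shf (r-1) N + 1 ≤ Shf r N)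
  ∧ (∀ j m, 2 ≤ j → j + 1 ≤ m → m.choose j ≤ μ →
      m.choose (j+1) ≤ Lf (j-1) (m.choose j - 1))
  ∧ (∀ j V, 2 ≤ j → 1 ≤ V → V ≤ μ → Lf j V ≤ Lf (j-1) (V-1))
  ∧ (∀ j U V, 1 ≤ j → 1 ≤ U → 1 ≤ V → U + V - 1 ≤ μ →
      Lf j U + Lf j V ≤ Lf j (U+V-1))

theorem master : ∀ μ : ℕ, Pmu μ := by
  intro μ
  induction μ using Nat.strong_induction_on with
  | _ μ ih =>
  ----------------------------------------------------------------
  -- SUB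
  ----------------------------------------------------------------
  have hSUB : ∀ r X Y, 1 ≤ r → 1 ≤ X → 1 ≤ Y → X + Y ≤ μ →
      Shf r (X+Y) + 1 ≤ Shf r X + Shf r Y := by
    intro r X Y hr hX hY hsum
    rcases Nat.lt_or_ge r 2 with h2 | h2
    · have : r = 1 := by omega
      subst this
      rw [Shf_level_one (by omega), Shf_level_one hX, Shf_level_one hY]
    set m := topc r (X+Y) with hm
    have hms : m.choose r ≤ X + Y := topc_le (by omega)
    have hml : X + Y < (m+1).choose r := topc_lt (by omega)
    have hmge : r ≤ m := topc_ge (by omega) (by omega)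
    have hposC : 1 ≤ m.choose r := Nat.choose_pos hmge
    have caseA : ∀ X' Y', X' + Y' = X + Y → 1 ≤ X' → 1 ≤ Y' → m.choose r ≤ X' →
        Shf r (X'+Y') + 1 ≤ Shf r X' + Shf r Y' := by
      intro X' Y' hE hX' hY' hXb
      have hXlt : X' < (m+1).choose r := by omega
      have hbX : Shf r X' = m.choose (r-1) + Shf (r-1) (X' - m.choose r) :=
        Shf_block (by omega) hmge hXb hXlt
      have hbS : Shf r (X'+Y') = m.choose (r-1) + Shf (r-1) (X'+Y' - m.choose r) := by
        rw [hE]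
        exact Shf_block (by omega) hmge (by omega) (by omega)
      rcases Nat.eq_zero_or_pos (X' - m.choose r) with h0 | h1
      · have harg : X' + Y' - m.choose r = Y' := by omega
        rw [harg] at hbS
        rw [h0, Shf_zero] at hbX
        have hmono := (ih (X+Y-1) (by omega)).2.2.1 r Y' (by omega) hY' (by omega)
        omega
      · have hsub := (ih (X+Y-1) (by omega)).1 (r-1) (X' - m.choose r) Y'
          (by omega) h1 hY' (by omega)
        have harg : X' - m.choose r + Y' = X'+Y' - m.choose r := by omega
        rw [harg] at hsub
        have hmw := (ih (X+Y-1) (by omega)).2.2.1 r Y' (by omega) hY' (by omega)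
        omega
    by_cases hXb : m.choose r ≤ X
    · exact caseA X Y rfl hX hY hXb
    by_cases hYb : m.choose r ≤ Y
    · have h := caseA Y X (by omega) hY hX hYb
      rw [show Y + X = X + Y by omega] at h
      omega
    push_neg at hXb hYb
    have hmr : r + 1 ≤ m := by
      by_contra hc
      have hmr' : m = r := by omega
      rw [hmr', Nat.choose_self] at hXb
      omega
    have hC2 : 2 ≤ m.choose r := by omega
    set j := m - r with hj
    have hj1 : 1 ≤ j := by omega
    have hjm : j < m := by omega
    have hsymm : m.choose j = m.choose r := by
      rw [hj]; exact Nat.choose_symm (by omega)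
    have hsymm1 : m.choose (j+1) = m.choose (r-1) := by
      have h := Nat.choose_symm (n := m) (k := r-1) (by omega)
      rw [show m-(r-1) = j+1 by omega] at h
      exact h
    set W := X + Y - m.choose r with hW
    have hID1 := idt m j (m.choose r - X) hj1 hjm (by omega)
    rw [show m - j = r by omega,
        show m.choose j - (m.choose r - X) = X by omega, hsymm1] at hID1
    have hID2 := idt m j (m.choose r - Y) hj1 hjm (by omega)
    rw [show m - j = r by omega,
        show m.choose j - (m.choose r - Y) = Y by omega, hsymm1] at hID2
    have hID3 := idt m j (m.choose r - X + (m.choose r - Y) - 1) hj1 hjm (by omega)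
    rw [show m - j = r by omega,
        show m.choose j - (m.choose r - X + (m.choose r - Y) - 1) = W + 1 by omega,
        hsymm1] at hID3
    have hsupl := (ih (m.choose r - 1) (by omega)).2.2.2.2.2 j
      (m.choose r - X) (m.choose r - Y) hj1 (by omega) (by omega) (by omega)
    have hmono := (ih (X+Y-1) (by omega)).2.2.1 r (W+1) (by omega) (by omega) (by omega)
    have hshm : Shf (r-1) W ≤ Shf (r-1) (W+1) := Shf_mono (r-1) (by omega)
    have hblockS : Shf r (X+Y) = m.choose (r-1) + Shf (r-1) W := by
      have h := Shf_block (r := r) (m := m) (by omega) hmge hms hml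
      rw [← hW] at h
      exact h
    omega
  ----------------------------------------------------------------
  -- BMONO
  ----------------------------------------------------------------
  have hBMONO : ∀ r ν, 1 ≤ r → r ≤ ν → ν.choose r ≤ μ →
      Shf (r-1) (ν.choose r) + 1 ≤ ν.choose (r-1) := by
    intro r ν hr hrν hb
    rcases Nat.lt_or_ge r 2 with h2 | h2
    · have : r = 1 := by omega
      subst this
      simp
    rcases eq_or_lt_of_le hrν with he | hν
    · rw [← he, Nat.choose_self, Shf_one (by omega), choose_pred_self (by omega)]
      omega
    · have hps : ν.choose r = (ν-1).choose (r-1) + (ν-1).choose r := by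
        have h := pascal (ν-1) r (by omega)
        rw [show ν-1+1 = ν by omega] at h
        exact h
      have hpos1 : 1 ≤ (ν-1).choose r := Nat.choose_pos (by omega)
      have hpos2 : 1 ≤ (ν-1).choose (r-1) := Nat.choose_pos (by omega)
      have hsub := hSUB (r-1) ((ν-1).choose r) ((ν-1).choose (r-1)) (by omega)
        hpos1 hpos2 (by omega)
      rw [show (ν-1).choose r + (ν-1).choose (r-1) = ν.choose r by omega] at hsub
      have hshb : Shf (r-1) ((ν-1).choose (r-1)) = (ν-1).choose (r-1-1) :=
        Shf_boundary (by omega) (by omega)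
      have hlt : (ν-1).choose r < ν.choose r := by omega
      have hbm := (ih ((ν-1).choose r) (by omega)).2.1 r (ν-1) hr (by omega) le_rfl
      have hps2 : ν.choose (r-1) = (ν-1).choose (r-1-1) + (ν-1).choose (r-1) := by
        have h := pascal (ν-1) (r-1) (by omega)
        rw [show ν-1+1 = ν by omega] at h
        exact h
      omega
  ----------------------------------------------------------------
  -- MONO
  ----------------------------------------------------------------
  have hMONO : ∀ r N, 1 ≤ r → 1 ≤ N → N ≤ μ → Shf (r-1) N + 1 ≤ Shf r N := by
    intro r N hr hN hNμ
    rcases Nat.lt_or_ge r 2 with h2 | h2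
    · have : r = 1 := by omega
      subst this
      simp [Shf_level_one hN]
    set ν := topc r N with hν
    have hts : ν.choose r ≤ N := topc_le (by omega)
    have htl : N < (ν+1).choose r := topc_lt (by omega)
    have hge : r ≤ ν := topc_ge (by omega) hN
    have hblock := Shf_block (r := r) (m := ν) (by omega) hge hts htl
    have hbm := hBMONO r ν (by omega) hge (by omega)
    rcases Nat.eq_zero_or_pos (N - ν.choose r) with h0 | h1
    · have hNe : N = ν.choose r := by omega
      rw [hNe, Shf_boundary (by omega) hge]
      exact hbm
    · have hposC : 1 ≤ ν.choose r := Nat.choose_pos hge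
      have hsub := hSUB (r-1) (ν.choose r) (N - ν.choose r) (by omega) hposC h1 (by omega)
      rw [show ν.choose r + (N - ν.choose r) = N by omega] at hsub
      omega
  ----------------------------------------------------------------
  -- DIAG
  ----------------------------------------------------------------
  have hDIAG : ∀ j m, 2 ≤ j → j + 1 ≤ m → m.choose j ≤ μ →
      m.choose (j+1) ≤ Lf (j-1) (m.choose j - 1) := by
    intro j m hj hm hb
    rcases eq_or_lt_of_le hm with he | hlt
    · rw [← he, Nat.choose_succ_self_right, Nat.choose_self,
        show j + 1 - 1 = j from rfl, Lf_diag_base hj]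
    · have hps : m.choose j = (m-1).choose (j-1) + (m-1).choose j := by
        have h := pascal (m-1) j (by omega)
        rw [show m-1+1 = m by omega] at h
        exact h
      have hpos1 : 1 ≤ (m-1).choose (j-1) := Nat.choose_pos (by omega)
      have hpos2 : 1 ≤ (m-1).choose j := Nat.choose_pos (by omega)
      have hposm : 1 ≤ m.choose j := Nat.choose_pos (by omega)
      have hsupl := (ih (m.choose j - 1) (by omega)).2.2.2.2.2 (j-1)
        ((m-1).choose (j-1)) ((m-1).choose j) (by omega) hpos1 hpos2 (by omega)
      rw [show (m-1).choose (j-1) + (m-1).choose j - 1 = m.choose j - 1 by omega] at hsupl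
      have hLb : Lf (j-1) ((m-1).choose (j-1)) = (m-1).choose j := by
        have h := Lf_boundary (j := j-1) (m := m-1) (by omega) (by omega)
        rw [show j-1+1 = j by omega] at h
        exact h
      have hdlt : (m-1).choose j < m.choose j := by omega
      have hdiag := (ih ((m-1).choose j) (by omega)).2.2.2.1 j (m-1) hj (by omega) le_rfl
      have hmono := Lf_mono (j-1) (M := (m-1).choose j - 1) (N := (m-1).choose j) (by omega)
      have hps' : m.choose (j+1) = (m-1).choose j + (m-1).choose (j+1) := by
        have h := pascal (m-1) (j+1) (by omega)
        rw [show m-1+1 = m by omega, show j+1-1 = j from rfl] at h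
        exact h
      omega
  ----------------------------------------------------------------
  -- CROSS
  ----------------------------------------------------------------
  have hCROSS : ∀ j V, 2 ≤ j → 1 ≤ V → V ≤ μ → Lf j V ≤ Lf (j-1) (V-1) := by
    intro j V hj hV hVμ
    set m := topc j V with hmv
    have hts : m.choose j ≤ V := topc_le (by omega)
    have htl : V < (m+1).choose j := topc_lt (by omega)
    have hge : j ≤ m := topc_ge (by omega) hV
    have hblock := Lf_block (j := j) (m := m) (by omega) hge hts htl
    rcases eq_or_lt_of_le hge with he | hlt
    · rw [← he, Nat.choose_self, Nat.choose_succ_self] at hblock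
      rw [hblock]
      omega
    · have hC2 : 2 ≤ m.choose j := by
        have := choose_ge_sub m j (by omega) (by omega)
        omega
      have hsupl := (ih (V-1) (by omega)).2.2.2.2.2 (j-1)
        (V - m.choose j + 1) (m.choose j - 1) (by omega) (by omega) (by omega) (by omega)
      rw [show V - m.choose j + 1 + (m.choose j - 1) - 1 = V - 1 by omega] at hsupl
      have hdiag := hDIAG j m hj (by omega) (by omega)
      have hmono := Lf_mono (j-1) (M := V - m.choose j) (N := V - m.choose j + 1) (by omega)
      omega
  ----------------------------------------------------------------
  -- SUPL
  ----------------------------------------------------------------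
  have hSUPL : ∀ j U V, 1 ≤ j → 1 ≤ U → 1 ≤ V → U + V - 1 ≤ μ →
      Lf j U + Lf j V ≤ Lf j (U+V-1) := by
    have key : ∀ j U V, 1 ≤ j → 1 ≤ U → 1 ≤ V → V ≤ U → U + V - 1 ≤ μ →
        Lf j U + Lf j V ≤ Lf j (U+V-1) := by
      intro j U V hj hU hV hVU hμ'
      rcases Nat.lt_or_ge j 2 with h2 | h2
      · have : j = 1 := by omega
        subst this
        rw [Lf_one_level, Lf_one_level, Lf_one_level]
        exact choose_two_superadd hU hV
      rcases eq_or_lt_of_le hV with h1 | hV2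
      · rw [← h1, show U + 1 - 1 = U by omega, Lf_small (by omega : (1:ℕ) ≤ j)]
        omega
      set m := topc j U with hmu
      have hts : m.choose j ≤ U := topc_le (by omega)
      have htl : U < (m+1).choose j := topc_lt (by omega)
      have hge : j ≤ m := topc_ge (by omega) hU
      have hposC : 1 ≤ m.choose j := Nat.choose_pos hge
      by_cases hii : U + V - 1 < (m+1).choose j
      · have hbS : Lf j (U+V-1) = m.choose (j+1) + Lf (j-1) (U+V-1 - m.choose j) :=
          Lf_block (by omega) hge (by omega) hii
        have hbU : Lf j U = m.choose (j+1) + Lf (j-1) (U - m.choose j) :=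
          Lf_block (by omega) hge hts htl
        have hcross := hCROSS j V h2 (by omega) (by omega)
        rcases Nat.eq_zero_or_pos (U - m.choose j) with h0 | hpos
        · have harg : U + V - 1 - m.choose j = V - 1 := by omega
          rw [harg] at hbS
          rw [h0, Lf_zero] at hbU
          omega
        · have hsupl2 := (ih (U - m.choose j + V - 1) (by omega)).2.2.2.2.2 (j-1)
            (U - m.choose j) V (by omega) hpos (by omega) le_rfl
          rw [show U - m.choose j + V - 1 = U + V - 1 - m.choose j by omega] at hsupl2
          have hmono := Lf_mono (j-1) (M := V - 1) (N := V) (by omega)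
          omega
      · push_neg at hii
        set M := topc j (U+V-1) with hM
        have hMs : M.choose j ≤ U+V-1 := topc_le (by omega)
        have hMl : U+V-1 < (M+1).choose j := topc_lt (by omega)
        have hMge : j ≤ M := topc_ge (by omega) (by omega)
        have hmM : m + 1 ≤ M := by
          by_contra hc
          have h3 : (M+1).choose j ≤ (m+1).choose j := Nat.choose_le_choose _ (by omega)
          omega
        have hUM : U < M.choose j := by
          have h3 : (m+1).choose j ≤ M.choose j := Nat.choose_le_choose _ (by omega)
          omega
        have hVM : V < M.choose j := by omega
        set T := U + V - 1 - M.choose j with hT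
        have hbS : Lf j (U+V-1) = M.choose (j+1) + Lf (j-1) T := by
          have h := Lf_block (by omega) hMge hMs hMl
          rw [← hT] at h
          exact h
        have hID1 := idt M j U (by omega) (by omega) (le_of_lt hUM)
        have hID2 := idt M j V (by omega) (by omega) (le_of_lt hVM)
        have hID3 := idt M j (T+1) (by omega) (by omega) (by omega)
        rw [show M.choose j - (T+1) = M.choose j - U + (M.choose j - V) by omega] at hID3
        have hsub := hSUB (M - j) (M.choose j - U) (M.choose j - V)
          (by omega) (by omega) (by omega) (by omega)
        have hcross := hCROSS j (T+1) h2 (by omega) (by omega)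
        rw [show T+1-1 = T from rfl] at hcross
        omega
    intro j U V hj hU hV hμ'
    rcases le_total V U with h | h
    · exact key j U V hj hU hV h hμ'
    · have h2 := key j V U hj hV hU h (by omega)
      rw [show V + U - 1 = U + V - 1 by omega] at h2
      omega
  exact ⟨hSUB, hBMONO, hMONO, hDIAG, hCROSS, hSUPL⟩

end ALX

namespace ALX

def nval (a : ℕ → ℕ) (s k : ℕ) : ℕ := ∑ i ∈ Finset.range (s+1), (a i).choose (k - i)

lemma adm_tail {k s : ℕ} {a : ℕ → ℕ} (h : Admissible k (s+1) a) :
    Admissible (k-1) s (fun i => a (i+1)) := by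
  obtain ⟨h1, h2, h3⟩ := h
  refine ⟨by omega, fun i hi => h2 (i+1) (by omega), ?_⟩
  show k - 1 - s ≤ a (s+1)
  omega

lemma adm_a0 : ∀ s k (a : ℕ → ℕ), Admissible k s a → k ≤ a 0 := by
  intro s
  induction s with
  | zero =>
    intro k a h
    have h3 := h.2.2
    simpa using h3
  | succ s ihs =>
    intro k a h
    have ht := adm_tail h
    have h1 : k - 1 ≤ a 1 := ihs (k-1) _ ht
    have h2 : a 1 < a 0 := h.2.1 0 (by omega)
    have hk := h.1
    omega

lemma nval_zero_s (a : ℕ → ℕ) (k : ℕ) : nval a 0 k = (a 0).choose k := by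
  unfold nval; simp

lemma nval_succ (a : ℕ → ℕ) (s k : ℕ) :
    nval a (s+1) k = (a 0).choose k + nval (fun i => a (i+1)) s (k-1) := by
  unfold nval
  rw [Finset.sum_range_succ']
  have h2 : ∑ i ∈ Finset.range (s+1), (a (i+1)).choose (k - (i+1))
      = ∑ i ∈ Finset.range (s+1), (a (i+1)).choose (k - 1 - i) := by
    apply Finset.sum_congr rfl
    intro i _
    congr 1
    omega
  rw [h2, Nat.sub_zero]
  exact add_comm _ _

lemma nval_lb {k s : ℕ} {a : ℕ → ℕ} (_ : Admissible k s a) :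
    (a 0).choose k ≤ nval a s k := by
  have h0 : (0:ℕ) ∈ Finset.range (s+1) := Finset.mem_range.mpr (by omega)
  have := Finset.single_le_sum (f := fun i => (a i).choose (k - i))
    (fun i _ => Nat.zero_le _) h0
  simpa [nval] using this

lemma nval_ub : ∀ s k (a : ℕ → ℕ), Admissible k s a → nval a s k + 1 ≤ (a 0 + 1).choose k := by
  intro s
  induction s with
  | zero =>
    intro k a h
    rw [nval_zero_s]
    have hk : 1 ≤ k := by have := h.1; omega
    have ha : k ≤ a 0 := adm_a0 0 k a h
    have hp := pascal (a 0) k hk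
    have hpos : 1 ≤ (a 0).choose (k-1) := Nat.choose_pos (by omega)
    omega
  | succ s ihs =>
    intro s1k a h
    have hk : 2 ≤ s1k := by have := h.1; omega
    have ht := adm_tail h
    have h1 : nval (fun i => a (i+1)) s (s1k-1) + 1 ≤ (a 1 + 1).choose (s1k-1) :=
      ihs (s1k-1) _ ht
    rw [nval_succ]
    have h2 : a 1 < a 0 := h.2.1 0 (by omega)
    have h3 : (a 1 + 1).choose (s1k-1) ≤ (a 0).choose (s1k-1) :=
      Nat.choose_le_choose _ (by omega)
    have hp := pascal (a 0) s1k (by omega)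
    omega

lemma eval_L : ∀ s k (a : ℕ → ℕ), Admissible k s a → Lf k (nval a s k) = nval a s (k+1) := by
  intro s
  induction s with
  | zero =>
    intro k a h
    rw [nval_zero_s, nval_zero_s]
    have hk : 1 ≤ k := by have := h.1; omega
    exact Lf_boundary hk (adm_a0 0 k a h)
  | succ s ihs =>
    intro k a h
    have hk : 2 ≤ k := by have := h.1; omega
    have ht := adm_tail h
    have ha0 : k ≤ a 0 := adm_a0 _ _ _ h
    have hub : nval (fun i => a (i+1)) s (k-1) + 1 ≤ (a 1 + 1).choose (k-1) :=
      nval_ub s (k-1) _ ht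
    have hlb : (a 1).choose (k-1) ≤ nval (fun i => a (i+1)) s (k-1) := nval_lb ht
    have hta0 : k - 1 ≤ a 1 := adm_a0 s (k-1) _ ht
    have hpos : 1 ≤ nval (fun i => a (i+1)) s (k-1) := by
      have := Nat.choose_pos (n := a 1) (k := k-1) hta0
      omega
    have h2 : a 1 < a 0 := h.2.1 0 (by omega)
    have hT : nval (fun i => a (i+1)) s (k-1) + 1 ≤ (a 0).choose (k-1) := by
      have h3 : (a 1 + 1).choose (k-1) ≤ (a 0).choose (k-1) :=
        Nat.choose_le_choose _ (by omega)
      omega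
    rw [nval_succ a s k, nval_succ a s (k+1), show k+1-1 = k from rfl]
    set T := nval (fun i => a (i+1)) s (k-1) with hTdef
    have hp := pascal (a 0) k (by omega)
    have hblock : Lf k ((a 0).choose k + T) =
        (a 0).choose (k+1) + Lf (k-1) ((a 0).choose k + T - (a 0).choose k) := by
      apply Lf_block (by omega) ha0 (by omega)
      omega
    rw [hblock, show (a 0).choose k + T - (a 0).choose k = T by omega]
    have hih := ihs (k-1) _ ht
    rw [← hTdef] at hih
    rw [show k-1+1 = k by omega] at hih
    rw [hih]

end ALX

lemma cSumZ_to_nval (x : ℕ → ℕ) (s k : ℕ) (hsk : s < k) :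
    cSumZ x s (k:ℤ) = ALX.nval x s k := by
  unfold cSumZ ALX.nval chooseZ
  apply Finset.sum_congr rfl
  intro i hi
  have hik : i < k := by have := Finset.mem_range.mp hi; omega
  rw [if_pos (by push_cast; omega)]
  congr 1
  omega

lemma cSumZ_to_nval' (x : ℕ → ℕ) (s k : ℕ) (hsk : s < k) :
    cSumZ x s ((k:ℤ)+1) = ALX.nval x s (k+1) := by
  unfold cSumZ ALX.nval chooseZ
  apply Finset.sum_congr rfl
  intro i hi
  have hik : i < k := by have := Finset.mem_range.mp hi; omega
  rw [if_pos (by push_cast; omega)]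
  congr 1
  omega

/-- Lemma (algorithm): for `k > 0` and sequences admissible for `k` with `c_k ≤ a_k`, if
`Σ C(c_{k-i}, k-i) + Σ C(a_{k-i}, k-i) = C(a_k+1, k) + Σ C(b_{k-i}, k-i)`, then
`C(a_k+1, k+1) + Σ C(b_{k-i}, k+1-i) > Σ C(c_{k-i}, k+1-i) + Σ C(a_{k-i}, k+1-i)`. -/
theorem algorithm_lemma (k s t u : ℕ) (a b c : ℕ → ℕ) (hk : 0 < k)
    (ha : Admissible k s a) (hb : Admissible k t b) (hc : Admissible k u c)
    (hca : c 0 ≤ a 0)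
    (heq : cSumZ c u (k : ℤ) + cSumZ a s (k : ℤ) = (a 0 + 1).choose k + cSumZ b t (k : ℤ)) :
    cSumZ c u ((k : ℤ) + 1) + cSumZ a s ((k : ℤ) + 1) <
      (a 0 + 1).choose (k + 1) + cSumZ b t ((k : ℤ) + 1) := by
  have hsk := ha.1
  have htk := hb.1
  have huk := hc.1
  rw [cSumZ_to_nval c u k huk, cSumZ_to_nval a s k hsk, cSumZ_to_nval b t k htk] at heq
  rw [cSumZ_to_nval' c u k huk, cSumZ_to_nval' a s k hsk, cSumZ_to_nval' b t k htk]
  rw [← ALX.eval_L u k c hc, ← ALX.eval_L s k a ha, ← ALX.eval_L t k b hb]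
  set Sa := ALX.nval a s k with hSa
  set Sb := ALX.nval b t k with hSb
  set Sc := ALX.nval c u k with hSc
  have hka : k ≤ a 0 := ALX.adm_a0 s k a ha
  have hkb : k ≤ b 0 := ALX.adm_a0 t k b hb
  have hkc : k ≤ c 0 := ALX.adm_a0 u k c hc
  have hub_a : Sa + 1 ≤ (a 0 + 1).choose k := ALX.nval_ub s k a ha
  have hub_c0 : Sc + 1 ≤ (c 0 + 1).choose k := ALX.nval_ub u k c hc
  have hub_c : Sc + 1 ≤ (a 0 + 1).choose k := by
    have := Nat.choose_le_choose k (show c 0 + 1 ≤ a 0 + 1 by omega)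
    omega
  have hpos_a : 1 ≤ Sa := by
    have h1 := ALX.nval_lb ha
    have h2 := Nat.choose_pos (n := a 0) (k := k) hka
    omega
  have hpos_c : 1 ≤ Sc := by
    have h1 := ALX.nval_lb hc
    have h2 := Nat.choose_pos (n := c 0) (k := k) hkc
    omega
  have hpos_b : 1 ≤ Sb := by
    have h1 := ALX.nval_lb hb
    have h2 := Nat.choose_pos (n := b 0) (k := k) hkb
    omega
  set n := a 0 + 1 with hn
  have hkn : k < n := by omega
  have hID_a := ALX.idt n k Sa (by omega) hkn (by omega)
  have hID_c := ALX.idt n k Sc (by omega) hkn (by omega)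
  have hID_b := ALX.idt n k Sb (by omega) hkn (by omega)
  rw [show n.choose k - Sb = n.choose k - Sa + (n.choose k - Sc) by omega] at hID_b
  have hSUB := (ALX.master (n.choose k)).1 (n-k) (n.choose k - Sa) (n.choose k - Sc)
    (by omega) (by omega) (by omega) (by omega)
  omega
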